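/- (Good-λ inequality implies a Φ-moment inequality.) Let (Ω, 𝒜, P) be a probability space and F, G : Ω → [0,∞) measurable. Suppose there exist δ ∈ (0,1] and ε ≥ 0 such that P(G > 2λ and F ≤ δλ) ≤ ε·P(G > λ) for all λ > 0. Let Φ : [0,∞) → [0,∞) be nondecreasing with Φ(0) = 0, and suppose there exist K > 1 and b ≥ 0 with Φ(2λ) ≤ K·Φ(λ) + b for all λ ≥ 0. Let M be a positive integer with 2^{−M} ≤ δ, and assume ε·K ≤ 1/2 and E[Φ(G)] < ∞. Then E[Φ(G)] ≤ 2·K^{M+1}·E[Φ(F)] + 2b·(1 + M·K^{M+1}). -/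

import Mathlib

open MeasureTheory ENNReal Set Filter Topology

private lemma phi_iter (Φ : ℝ → ℝ) (K b : ℝ) (hK : 1 < K) (hb : 0 ≤ b)
    (hΔ₂ : ∀ lam ≥ (0:ℝ), Φ (2 * lam) ≤ K * Φ lam + b) :
    ∀ n : ℕ, ∀ x : ℝ, 0 ≤ x → Φ ((2:ℝ)^n * x) ≤ K^n * Φ x + b * n * K^n := by
  intro n
  induction n with
  | zero => intro x hx; simp
  | succ n ih =>
    intro x hx
    have h2n : (0:ℝ) ≤ 2^n * x := by positivity
    have h1 : Φ ((2:ℝ)^(n+1) * x) ≤ K * Φ ((2:ℝ)^n * x) + b := by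
      have h := hΔ₂ ((2:ℝ)^n * x) h2n
      rw [show (2:ℝ)^(n+1) * x = 2 * ((2:ℝ)^n * x) by ring]
      exact h
    have h2 := ih x hx
    have hK0 : (0:ℝ) < K := lt_trans one_pos hK
    have hKn : (1:ℝ) ≤ K^(n+1) := one_le_pow₀ hK.le
    have h4 : K * Φ ((2:ℝ)^n * x) ≤ K * (K^n * Φ x + b * (n:ℝ) * K^n) :=
      mul_le_mul_of_nonneg_left h2 hK0.le
    have h5 : b ≤ b * K^(n+1) := le_mul_of_one_le_right hb hKn
    have h6 : K * (K^n * Φ x + b * (n:ℝ) * K^n) + b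
        = K^(n+1) * Φ x + b * (n:ℝ) * K^(n+1) + b := by rw [pow_succ]; ring
    have h7 : b * ((n:ℝ)+1) * K^(n+1) = b * (n:ℝ) * K^(n+1) + b * K^(n+1) := by ring
    push_cast
    linarith

private lemma key_dist {Ω : Type*} [MeasurableSpace Ω] (P : Measure Ω) [IsProbabilityMeasure P]
    (F G : Ω → ℝ) (hF : Measurable F) (hG : Measurable G) (hGpos : ∀ ω, 0 ≤ G ω)
    (δ ε : ℝ) (hδ0 : 0 < δ)
    (hgood : ∀ lam > (0:ℝ),
      P {ω | 2 * lam < G ω ∧ F ω ≤ δ * lam} ≤ ENNReal.ofReal ε * P {ω | lam < G ω})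
    (Φ : ℝ → ℝ) (hmono : MonotoneOn Φ (Set.Ici (0:ℝ))) (h0 : Φ 0 = 0)
    (t : ℝ) (ht : 0 ≤ t) :
    P {ω | t < Φ (G ω / 2)} ≤ ENNReal.ofReal ε * P {ω | t < Φ (G ω)}
      + P {ω | t < Φ (F ω / δ)} := by
  set A : Set ℝ := {x | 0 < x ∧ t < Φ x} with hAdef
  have hup : ∀ x ∈ A, ∀ y : ℝ, x ≤ y → y ∈ A := by
    intro x hx y hxy
    exact ⟨lt_of_lt_of_le hx.1 hxy,
      lt_of_lt_of_le hx.2 (hmono hx.1.le (le_trans hx.1.le hxy) hxy)⟩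
  have hmemG : ∀ ω, t < Φ (G ω / 2) → G ω / 2 ∈ A := by
    intro ω h
    refine ⟨?_, h⟩
    rcases lt_or_eq_of_le (by linarith [hGpos ω] : (0:ℝ) ≤ G ω / 2) with h' | h'
    · exact h'
    · exfalso; rw [← h', h0] at h; exact absurd h (not_lt.2 ht)
  have hsplit : ∀ lam > (0:ℝ), P {ω | 2*lam < G ω}
      ≤ ENNReal.ofReal ε * P {ω | lam < G ω} + P {ω | δ*lam < F ω} := by
    intro lam hlam
    have h1 : P {ω | 2*lam < G ω}
        ≤ P ({ω | 2*lam < G ω ∧ F ω ≤ δ*lam} ∪ {ω | δ*lam < F ω}) := by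
      apply measure_mono
      intro ω h
      rcases le_or_gt (F ω) (δ*lam) with h' | h'
      · exact Or.inl ⟨h, h'⟩
      · exact Or.inr h'
    refine h1.trans ((measure_union_le _ _).trans ?_)
    exact add_le_add_left (hgood lam hlam) _
  rcases eq_empty_or_nonempty A with hAe | hne
  · have : {ω | t < Φ (G ω / 2)} = ∅ := by
      ext ω; simp only [mem_setOf_eq, mem_empty_iff_false, iff_false]
      intro h
      exact absurd (hmemG ω h) (by rw [hAe]; exact notMem_empty _)
    rw [this]; simp
  · have hbdd : BddBelow A := ⟨0, fun x hx => hx.1.le⟩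
    set c : ℝ := sInf A with hcdef
    have hc0 : 0 ≤ c := le_csInf hne (fun x hx => hx.1.le)
    have hAIoi : c ∉ A → A = Ioi c := by
      intro hcA
      ext x
      constructor
      · intro hx
        rcases lt_or_eq_of_le (csInf_le hbdd hx) with h | h
        · exact h
        · rw [← h] at hx; exact absurd hx hcA
      · intro hx
        obtain ⟨a, ha, hax⟩ := exists_lt_of_csInf_lt hne hx
        exact hup a ha x hax.le
    rcases eq_or_lt_of_le hc0 with hc0' | hcpos
    · -- c = 0, A = Ioi 0
      have h0A : c ∉ A := fun h => absurd (hc0' ▸ h.1) (lt_irrefl _)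
      have hA : A = Ioi (0:ℝ) := by rw [hAIoi h0A, ← hc0']
      have hsub : {ω | t < Φ (G ω / 2)} ⊆ {ω | 0 < G ω} := by
        intro ω h
        have := hmemG ω h
        rw [hA] at this
        simpa using by linarith [mem_Ioi.1 this]
      have hU : {ω | (0:ℝ) < G ω} = ⋃ n : ℕ, {ω | 2*(1/((n:ℝ)+1)) < G ω} := by
        ext ω
        simp only [mem_setOf_eq, mem_iUnion]
        constructor
        · intro h
          obtain ⟨n, hn⟩ := exists_nat_one_div_lt (half_pos h)
          exact ⟨n, by push_cast at hn ⊢; linarith⟩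
        · rintro ⟨n, hn⟩
          have : (0:ℝ) < 1/((n:ℝ)+1) := by positivity
          linarith
      have hmonoS : Monotone (fun n : ℕ => {ω | 2*(1/((n:ℝ)+1)) < G ω}) := by
        intro n m hnm ω h
        have h1 : (1:ℝ)/((m:ℝ)+1) ≤ 1/((n:ℝ)+1) := by
          apply one_div_le_one_div_of_le (by positivity)
          have : (n:ℝ) ≤ (m:ℝ) := Nat.cast_le.mpr hnm
          linarith
        simp only [mem_setOf_eq] at h ⊢
        linarith
      calc P {ω | t < Φ (G ω / 2)} ≤ P {ω | (0:ℝ) < G ω} := measure_mono hsub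
        _ = ⨆ n : ℕ, P {ω | 2*(1/((n:ℝ)+1)) < G ω} := by
            rw [hU]; exact hmonoS.measure_iUnion
        _ ≤ _ := by
            apply iSup_le
            intro n
            have hpos : (0:ℝ) < 1/((n:ℝ)+1) := by positivity
            refine (hsplit _ hpos).trans (add_le_add ?_ ?_)
            · refine mul_le_mul_right (measure_mono ?_) _
              intro ω h
              have hωA : G ω ∈ A := by rw [hA]; exact lt_trans hpos h
              exact hωA.2
            · refine measure_mono ?_
              intro ω h
              have hd : c < F ω / δ := by
                rw [← hc0']
                have : 0 < δ * (1/((n:ℝ)+1)) := by positivity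
                have hF0 : 0 < F ω := lt_trans this h
                positivity
              have : F ω / δ ∈ A := by rw [hA]; rw [← hc0'] at hd; exact hd
              exact this.2
    · by_cases hcA : c ∈ A
      · -- A ⊇ [c,∞), use approximation from below
        set lamn : ℕ → ℝ := fun n => c - c/((n:ℝ)+2) with hlam
        have hlpos : ∀ n, 0 < lamn n := by
          intro n
          have h1 : c/((n:ℝ)+2) < c := by
            rw [div_lt_iff₀ (by positivity)]
            nlinarith
          simpa [hlam] using by linarith
        have hllt : ∀ n, lamn n < c := by
          intro n
          have : 0 < c/((n:ℝ)+2) := by positivity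
          simp only [hlam]; linarith
        have hlmono : Monotone lamn := by
          intro n m hnm
          simp only [hlam]
          have : c/((m:ℝ)+2) ≤ c/((n:ℝ)+2) := by
            apply div_le_div_of_nonneg_left hcpos.le (by positivity)
            have : (n:ℝ) ≤ (m:ℝ) := Nat.cast_le.mpr hnm
            linarith
          linarith
        have hltend : Tendsto lamn atTop (𝓝 c) := by
          have h1 : Tendsto (fun n : ℕ => c/((n:ℝ)+2)) atTop (𝓝 0) := by
            apply Tendsto.div_atTop tendsto_const_nhds
            exact tendsto_atTop_add_const_right atTop 2 tendsto_natCast_atTop_atTop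
          simpa [hlam] using (tendsto_const_nhds (x := c)).sub h1
        set s : ℕ → Set Ω := fun n => {ω | lamn n < G ω} with hs
        set s' : ℕ → Set Ω := fun n => {ω | δ * lamn n < F ω} with hs'
        have hsanti : Antitone s := fun n m hnm ω h =>
          lt_of_le_of_lt (hlmono hnm) h
        have hs'anti : Antitone s' := fun n m hnm ω h =>
          lt_of_le_of_lt (by exact mul_le_mul_of_nonneg_left (hlmono hnm) hδ0.le) h
        have hsInter : ⋂ n, s n = {ω | c ≤ G ω} := by
          ext ω
          simp only [mem_iInter, hs, mem_setOf_eq]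
          constructor
          · intro h
            exact le_of_tendsto hltend (Eventually.of_forall fun n => (h n).le)
          · intro h n
            exact lt_of_lt_of_le (hllt n) h
        have hs'Inter : ⋂ n, s' n = {ω | δ * c ≤ F ω} := by
          ext ω
          simp only [mem_iInter, hs', mem_setOf_eq]
          constructor
          · intro h
            have : Tendsto (fun n => δ * lamn n) atTop (𝓝 (δ * c)) :=
              hltend.const_mul δ
            exact le_of_tendsto this (Eventually.of_forall fun n => (h n).le)
          · intro h n
            have : δ * lamn n < δ * c := by
              exact mul_lt_mul_of_pos_left (hllt n) hδ0
            linarith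
        have htend1 : Tendsto (fun n => P (s n)) atTop (𝓝 (P {ω | c ≤ G ω})) := by
          rw [← hsInter]
          exact tendsto_measure_iInter_atTop
            (fun n => (hG measurableSet_Ioi).nullMeasurableSet) hsanti
            ⟨0, measure_ne_top _ _⟩
        have htend2 : Tendsto (fun n => P (s' n)) atTop (𝓝 (P {ω | δ * c ≤ F ω})) := by
          rw [← hs'Inter]
          exact tendsto_measure_iInter_atTop
            (fun n => (hF measurableSet_Ioi).nullMeasurableSet) hs'anti
            ⟨0, measure_ne_top _ _⟩
        have htend : Tendsto (fun n => ENNReal.ofReal ε * P (s n) + P (s' n)) atTop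
            (𝓝 (ENNReal.ofReal ε * P {ω | c ≤ G ω} + P {ω | δ * c ≤ F ω})) :=
          (ENNReal.Tendsto.const_mul htend1 (Or.inr ENNReal.ofReal_ne_top)).add htend2
        have hbound : ∀ n, P {ω | t < Φ (G ω / 2)} ≤ ENNReal.ofReal ε * P (s n) + P (s' n) := by
          intro n
          have hsub : {ω | t < Φ (G ω / 2)} ⊆ {ω | 2 * lamn n < G ω} := by
            intro ω h
            have hA := hmemG ω h
            have : c ≤ G ω / 2 := csInf_le hbdd hA
            have := hllt n
            simp only [mem_setOf_eq]; linarith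
          exact (measure_mono hsub).trans (hsplit _ (hlpos n))
        have hlim : P {ω | t < Φ (G ω / 2)}
            ≤ ENNReal.ofReal ε * P {ω | c ≤ G ω} + P {ω | δ * c ≤ F ω} :=
          ge_of_tendsto' htend hbound
        refine hlim.trans (add_le_add ?_ ?_)
        · refine mul_le_mul_right (measure_mono ?_) _
          intro ω h
          exact (hup c hcA (G ω) h).2
        · refine measure_mono ?_
          intro ω h
          have h' : δ * c ≤ F ω := h
          have : c ≤ F ω / δ := by
            rw [le_div_iff₀ hδ0]; linarith
          exact (hup c hcA (F ω / δ) this).2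
      · -- c ∉ A, c > 0 : A = Ioi c, direct
        have hA := hAIoi hcA
        have hsub : {ω | t < Φ (G ω / 2)} ⊆ {ω | 2*c < G ω} := by
          intro ω h
          have := hmemG ω h
          rw [hA, mem_Ioi] at this
          simp only [mem_setOf_eq]; linarith
        refine (measure_mono hsub).trans ((hsplit c hcpos).trans (add_le_add ?_ ?_))
        · refine mul_le_mul_right (measure_mono ?_) _
          intro ω h
          have : G ω ∈ A := by rw [hA]; exact h
          exact this.2
        · refine measure_mono ?_
          intro ω h
          have h' : δ * c < F ω := h
          have : F ω / δ ∈ A := by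
            rw [hA, mem_Ioi, lt_div_iff₀ hδ0]
            linarith
          exact this.2

/-- (Good-λ inequality implies a Φ-moment inequality.)
On a probability space, let `F, G ≥ 0` be measurable with
`P(G > 2λ, F ≤ δλ) ≤ ε·P(G > λ)` for all `λ > 0`, where `δ ∈ (0,1]`, `ε ≥ 0`.
Let `Φ` be nondecreasing on `[0,∞)` with `Φ(0) = 0` and `Φ(2λ) ≤ K·Φ(λ) + b`
(`K > 1`, `b ≥ 0`).  If `M ≥ 1` with `2^{-M} ≤ δ`, `ε·K ≤ 1/2` and `E[Φ(G)] < ∞`, then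
`E[Φ(G)] ≤ 2·K^{M+1}·E[Φ(F)] + 2b·(1 + M·K^{M+1})`. -/
theorem stmt11 {Ω : Type*} [MeasurableSpace Ω] (P : Measure Ω) [IsProbabilityMeasure P]
    (F G : Ω → ℝ) (hF : Measurable F) (hG : Measurable G)
    (hFpos : ∀ ω, 0 ≤ F ω) (hGpos : ∀ ω, 0 ≤ G ω)
    (δ ε : ℝ) (hδ : δ ∈ Set.Ioc (0:ℝ) 1) (hε : 0 ≤ ε)
    (hgood : ∀ lam > (0:ℝ),
      P {ω | 2 * lam < G ω ∧ F ω ≤ δ * lam} ≤ ENNReal.ofReal ε * P {ω | lam < G ω})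
    (Φ : ℝ → ℝ) (hmono : MonotoneOn Φ (Set.Ici (0:ℝ))) (h0 : Φ 0 = 0)
    (K b : ℝ) (hK : 1 < K) (hb : 0 ≤ b)
    (hΔ₂ : ∀ lam ≥ (0:ℝ), Φ (2 * lam) ≤ K * Φ lam + b)
    (M : ℕ) (hM : 1 ≤ M) (hMδ : ((2:ℝ) ^ M)⁻¹ ≤ δ)
    (hεK : ε * K ≤ 1 / 2)
    (hfin : ∫⁻ ω, ENNReal.ofReal (Φ (G ω)) ∂P < ⊤) :
    ∫⁻ ω, ENNReal.ofReal (Φ (G ω)) ∂P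
      ≤ ENNReal.ofReal (2 * K ^ (M + 1)) * ∫⁻ ω, ENNReal.ofReal (Φ (F ω)) ∂P
        + ENNReal.ofReal (2 * b * (1 + M * K ^ (M + 1))) := by
  obtain ⟨hδ0, hδ1⟩ := hδ
  have hK0 : (0:ℝ) < K := lt_trans one_pos hK
  -- nonnegativity of Φ on [0,∞)
  have hΦnn : ∀ x : ℝ, 0 ≤ x → 0 ≤ Φ x := by
    intro x hx
    have := hmono (le_refl (0:ℝ)) hx hx
    rwa [h0] at this
  -- measurability of compositions
  have hψmono : Monotone (fun x : ℝ => Φ (max x 0)) := fun a b hab =>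
    hmono (mem_Ici.2 (le_max_right _ _)) (mem_Ici.2 (le_max_right _ _)) (max_le_max hab le_rfl)
  have hψ : Measurable fun x : ℝ => Φ (max x 0) := hψmono.measurable
  have hmG : Measurable fun ω => Φ (G ω) := by
    have he : (fun ω => Φ (G ω)) = (fun x : ℝ => Φ (max x 0)) ∘ G :=
      funext fun ω => by simp [max_eq_left (hGpos ω)]
    rw [he]; exact hψ.comp hG
  have hmG2 : Measurable fun ω => Φ (G ω / 2) := by
    have he : (fun ω => Φ (G ω / 2)) = (fun x : ℝ => Φ (max x 0)) ∘ (fun ω => G ω / 2) :=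
      funext fun ω => by simp [max_eq_left (by linarith [hGpos ω] : (0:ℝ) ≤ G ω / 2)]
    rw [he]; exact hψ.comp (hG.div_const 2)
  have hmFδ : Measurable fun ω => Φ (F ω / δ) := by
    have he : (fun ω => Φ (F ω / δ)) = (fun x : ℝ => Φ (max x 0)) ∘ (fun ω => F ω / δ) :=
      funext fun ω => by simp [max_eq_left (div_nonneg (hFpos ω) hδ0.le)]
    rw [he]; exact hψ.comp (hF.div_const δ)
  have hmFF : Measurable fun ω => Φ (F ω) := by
    have he : (fun ω => Φ (F ω)) = (fun x : ℝ => Φ (max x 0)) ∘ F :=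
      funext fun ω => by simp [max_eq_left (hFpos ω)]
    rw [he]; exact hψ.comp hF
  set IG := ∫⁻ ω, ENNReal.ofReal (Φ (G ω)) ∂P with hIG
  set IG2 := ∫⁻ ω, ENNReal.ofReal (Φ (G ω / 2)) ∂P with hIG2
  set IF := ∫⁻ ω, ENNReal.ofReal (Φ (F ω / δ)) ∂P with hIF
  set IFF := ∫⁻ ω, ENNReal.ofReal (Φ (F ω)) ∂P with hIFF
  -- layer cake representations
  have LG : IG = ∫⁻ t in Ioi (0:ℝ), P {ω | t < Φ (G ω)} :=
    lintegral_eq_lintegral_meas_lt P (ae_of_all _ fun ω => hΦnn _ (hGpos ω)) hmG.aemeasurable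
  have LG2 : IG2 = ∫⁻ t in Ioi (0:ℝ), P {ω | t < Φ (G ω / 2)} :=
    lintegral_eq_lintegral_meas_lt P
      (ae_of_all _ fun ω => hΦnn _ (by linarith [hGpos ω])) hmG2.aemeasurable
  have LF : IF = ∫⁻ t in Ioi (0:ℝ), P {ω | t < Φ (F ω / δ)} :=
    lintegral_eq_lintegral_meas_lt P
      (ae_of_all _ fun ω => hΦnn _ (div_nonneg (hFpos ω) hδ0.le)) hmFδ.aemeasurable
  -- measurability of the distribution functions (antitone in t)
  have hmeasTG : Measurable fun t : ℝ => P {ω | t < Φ (G ω)} :=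
    Antitone.measurable (fun a b hab => measure_mono fun ω h => lt_of_le_of_lt hab h)
  have hmeasTF : Measurable fun t : ℝ => P {ω | t < Φ (F ω / δ)} :=
    Antitone.measurable (fun a b hab => measure_mono fun ω h => lt_of_le_of_lt hab h)
  -- Step 2: IG2 ≤ ε·IG + IF
  have step2 : IG2 ≤ ENNReal.ofReal ε * IG + IF := by
    rw [LG2, LG, LF]
    calc ∫⁻ t in Ioi (0:ℝ), P {ω | t < Φ (G ω / 2)}
        ≤ ∫⁻ t in Ioi (0:ℝ),
            (ENNReal.ofReal ε * P {ω | t < Φ (G ω)} + P {ω | t < Φ (F ω / δ)}) := by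
          refine lintegral_mono_ae (((ae_restrict_mem measurableSet_Ioi)).mono ?_)
          intro t ht
          exact key_dist P F G hF hG hGpos δ ε hδ0 hgood Φ hmono h0 t (le_of_lt ht)
      _ = _ := by
          rw [lintegral_add_left (hmeasTG.const_mul _), lintegral_const_mul _ hmeasTG]
  -- Step 3: IG ≤ K·IG2 + b (pointwise Δ₂)
  have step3 : IG ≤ ENNReal.ofReal K * IG2 + ENNReal.ofReal b := by
    have pt : ∀ ω, ENNReal.ofReal (Φ (G ω))
        ≤ ENNReal.ofReal K * ENNReal.ofReal (Φ (G ω / 2)) + ENNReal.ofReal b := by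
      intro ω
      have h1 : Φ (G ω) ≤ K * Φ (G ω / 2) + b := by
        have h := hΔ₂ (G ω / 2) (by linarith [hGpos ω])
        rwa [show 2 * (G ω / 2) = G ω by ring] at h
      calc ENNReal.ofReal (Φ (G ω)) ≤ ENNReal.ofReal (K * Φ (G ω / 2) + b) :=
            ENNReal.ofReal_le_ofReal h1
        _ = ENNReal.ofReal K * ENNReal.ofReal (Φ (G ω / 2)) + ENNReal.ofReal b := by
            rw [ENNReal.ofReal_add (mul_nonneg hK0.le (hΦnn _ (by linarith [hGpos ω]))) hb,
              ENNReal.ofReal_mul hK0.le]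
    calc IG ≤ ∫⁻ ω, (ENNReal.ofReal K * ENNReal.ofReal (Φ (G ω / 2)) + ENNReal.ofReal b) ∂P :=
          lintegral_mono pt
      _ = ENNReal.ofReal K * IG2 + ENNReal.ofReal b := by
          rw [lintegral_add_right _ measurable_const,
            lintegral_const_mul' _ _ ENNReal.ofReal_ne_top, lintegral_const,
            measure_univ, mul_one]
  -- combine: IG ≤ ofReal(εK)·IG + (K·IF + b)
  have comb : IG ≤ 2⁻¹ * IG + (ENNReal.ofReal K * IF + ENNReal.ofReal b) := by
    have h1 : IG ≤ ENNReal.ofReal K * (ENNReal.ofReal ε * IG + IF) + ENNReal.ofReal b :=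
      step3.trans (add_le_add_left (mul_le_mul_right step2 _) _)
    have h2 : ENNReal.ofReal K * (ENNReal.ofReal ε * IG + IF) + ENNReal.ofReal b
        = ENNReal.ofReal (ε * K) * IG + (ENNReal.ofReal K * IF + ENNReal.ofReal b) := by
      rw [ENNReal.ofReal_mul hε, mul_comm (ENNReal.ofReal ε) (ENNReal.ofReal K)]
      ring
    have h3 : ENNReal.ofReal (ε * K) ≤ 2⁻¹ := by
      calc ENNReal.ofReal (ε * K) ≤ ENNReal.ofReal (1/2) := ENNReal.ofReal_le_ofReal hεK
        _ = 2⁻¹ := by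
          rw [one_div, ENNReal.ofReal_inv_of_pos two_pos, ENNReal.ofReal_ofNat]
    calc IG ≤ ENNReal.ofReal (ε * K) * IG + (ENNReal.ofReal K * IF + ENNReal.ofReal b) := by
          rw [← h2]; exact h1
      _ ≤ 2⁻¹ * IG + (ENNReal.ofReal K * IF + ENNReal.ofReal b) :=
          add_le_add_left (mul_le_mul_left h3 _) _
  have hIGne : IG ≠ ⊤ := hfin.ne
  have key : IG ≤ 2 * (ENNReal.ofReal K * IF + ENNReal.ofReal b) := by
    set c := ENNReal.ofReal K * IF + ENNReal.ofReal b with hc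
    have h1 : IG / 2 + IG / 2 ≤ IG / 2 + c := by
      rw [ENNReal.add_halves]
      calc IG ≤ 2⁻¹ * IG + c := comb
        _ = IG / 2 + c := by rw [ENNReal.div_eq_inv_mul]
    have h2 : IG / 2 ≤ c := by
      have hne : IG / 2 ≠ ⊤ := (ENNReal.div_lt_top hIGne two_ne_zero).ne
      exact (ENNReal.add_le_add_iff_left hne).1 h1
    calc IG = IG / 2 + IG / 2 := (ENNReal.add_halves IG).symm
      _ ≤ c + c := add_le_add h2 h2
      _ = 2 * c := (two_mul c).symm
  -- Step 4: IF ≤ K^M·IFF + b·M·K^M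
  have step4 : IF ≤ ENNReal.ofReal (K^M) * IFF + ENNReal.ofReal (b * M * K^M) := by
    have pt : ∀ ω, ENNReal.ofReal (Φ (F ω / δ))
        ≤ ENNReal.ofReal (K^M) * ENNReal.ofReal (Φ (F ω)) + ENNReal.ofReal (b * M * K^M) := by
      intro ω
      have hdd : δ⁻¹ ≤ (2:ℝ)^M := by
        have h := one_div_le_one_div_of_le (by positivity : (0:ℝ) < ((2:ℝ)^M)⁻¹) hMδ
        rwa [one_div, one_div, inv_inv] at h
      have h1 : F ω / δ ≤ (2:ℝ)^M * F ω := by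
        rw [div_eq_mul_inv, mul_comm ((2:ℝ)^M) (F ω)]
        exact mul_le_mul_of_nonneg_left hdd (hFpos ω)
      have h2 : Φ (F ω / δ) ≤ Φ ((2:ℝ)^M * F ω) :=
        hmono (div_nonneg (hFpos ω) hδ0.le) (mem_Ici.2 (mul_nonneg (by positivity) (hFpos ω))) h1
      have h3 := phi_iter Φ K b hK hb hΔ₂ M (F ω) (hFpos ω)
      calc ENNReal.ofReal (Φ (F ω / δ)) ≤ ENNReal.ofReal (K^M * Φ (F ω) + b * M * K^M) :=
            ENNReal.ofReal_le_ofReal (h2.trans h3)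
        _ = _ := by
            rw [ENNReal.ofReal_add (mul_nonneg (by positivity) (hΦnn _ (hFpos ω)))
              (by positivity), ENNReal.ofReal_mul (by positivity)]
    calc IF ≤ ∫⁻ ω, (ENNReal.ofReal (K^M) * ENNReal.ofReal (Φ (F ω))
          + ENNReal.ofReal (b * M * K^M)) ∂P := lintegral_mono pt
      _ = _ := by
          rw [lintegral_add_right _ measurable_const,
            lintegral_const_mul' _ _ ENNReal.ofReal_ne_top, lintegral_const,
            measure_univ, mul_one]
  -- final assembly
  calc IG ≤ 2 * (ENNReal.ofReal K * IF + ENNReal.ofReal b) := key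
    _ ≤ 2 * (ENNReal.ofReal K * (ENNReal.ofReal (K^M) * IFF + ENNReal.ofReal (b * M * K^M))
          + ENNReal.ofReal b) := by gcongr
    _ = (ENNReal.ofReal 2 * ENNReal.ofReal K * ENNReal.ofReal (K^M)) * IFF
          + (ENNReal.ofReal 2 * ENNReal.ofReal K * ENNReal.ofReal (b * M * K^M)
            + ENNReal.ofReal 2 * ENNReal.ofReal b) := by
        rw [show (2:ℝ≥0∞) = ENNReal.ofReal 2 by simp]
        ring
    _ = ENNReal.ofReal (2 * K^(M+1)) * IFF
          + ENNReal.ofReal (2 * b * (1 + M * K^(M+1))) := by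
        congr 1
        · congr 1
          rw [← ENNReal.ofReal_mul (by norm_num), ← ENNReal.ofReal_mul (by positivity)]
          congr 1
          rw [pow_succ]; ring
        · rw [← ENNReal.ofReal_mul (by norm_num), ← ENNReal.ofReal_mul (by positivity),
            ← ENNReal.ofReal_mul (by norm_num),
            ← ENNReal.ofReal_add (by positivity) (by positivity)]
          congr 1
          rw [pow_succ]; ring
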